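/- Let 𝒯 be a set of k rooted phylogenetic trees and let (𝒜_L, 𝒜_R) be a bipartite of a cut-subforest 𝒜 of 𝒯. If Y_L and Y_R are embedded supertrees of 𝒜_L and 𝒜_R respectively, then the tree Y formed by connecting Y_L and Y_R to a new common root is an embedded supertree of 𝒜. -/

import Mathlib

/-- Rooted, unordered, leaf-labelled trees:
a tree is a single labelled leaf, or an (internal) root node with a list of subtrees
attached to it.  Being unordered, such trees are considered up to the
isomorphism `PTree.Iso` below.  The empty tree is represented by `none` in
`Option (PTree α)`. -/
inductive PTree (α : Type) : Type where
  | leaf : α → PTree α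
  | node : List (PTree α) → PTree α

namespace PTree

variable {α : Type} [DecidableEq α]

theorem sizeOf_lt_of_mem {α : Type} {c : PTree α} {cs : List (PTree α)}
    (h : c ∈ cs) : sizeOf c < sizeOf (PTree.node cs) := by
  have := List.sizeOf_lt_of_mem h
  simp only [node.sizeOf_spec]; omega

/-- `Subtree s t` : `s` is the complete subtree rooted at some node of `t`. -/
inductive Subtree : PTree α → PTree α → Prop where
  | refl (t : PTree α) : Subtree t t
  | child {s c : PTree α} {cs : List (PTree α)} :
      c ∈ cs → Subtree s c → Subtree s (node cs)

/-- The list of leaf labels of a tree. -/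
def labelList : PTree α → List α
  | leaf a => [a]
  | node cs => cs.attach.flatMap (fun c => labelList c.1)
decreasing_by exact sizeOf_lt_of_mem c.2

/-- The set `L(T)` of leaf labels of a tree. -/
def labels (t : PTree α) : Finset α := t.labelList.toFinset

/-- The size of a tree: the number of its leaves. -/
def treeSize (t : PTree α) : ℕ := t.labels.card

/-- The label set of a possibly empty tree. -/
def olabels : Option (PTree α) → Finset α
  | none => ∅
  | some t => t.labels

/-- Connecting a list of trees by a common root.  The empty list yields the
empty tree and a single tree yields that tree itself (no degree-two node is
created). -/
def connect : List (PTree α) → Option (PTree α)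
  | [] => none
  | [t] => some t
  | ts => some (node ts)

/-- The restriction `T|S` of `T` to a label set `S`: all leaves with labels
outside `S` are removed and all internal nodes of degree two are suppressed. -/
def restrict (S : Finset α) : PTree α → Option (PTree α)
  | leaf a => if a ∈ S then some (leaf a) else none
  | node cs => connect ((cs.attach.map (fun c => restrict S c.1)).reduceOption)
decreasing_by exact sizeOf_lt_of_mem c.2

/-- Restriction of a possibly empty tree. -/
def orestrict (S : Finset α) (t : Option (PTree α)) : Option (PTree α) :=
  t.bind (restrict S)

/-- Isomorphism (equality) of unordered leaf-labelled trees: equality of trees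
up to reordering of the children of each node. -/
inductive Iso : PTree α → PTree α → Prop where
  | leaf (a : α) : Iso (leaf a) (leaf a)
  | node {cs ds ds' : List (PTree α)} :
      List.Forall₂ Iso cs ds' → ds'.Perm ds → Iso (node cs) (node ds)

/-- One edge contraction: the edge between a node and one of its (internal)
children is contracted, merging the child into the parent. -/
inductive Contract : PTree α → PTree α → Prop where
  | top (l r ds : List (PTree α)) :
      Contract (node (l ++ node ds :: r)) (node (l ++ ds ++ r))
  | child {c c' : PTree α} (l r : List (PTree α)) :
      Contract c c' → Contract (node (l ++ c :: r)) (node (l ++ c' :: r))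

/-- `T` refines `T'` (written `T ⊵ T'`): `T'` can be obtained (as an
unordered tree) by contracting some edges of `T`. -/
def Refines (t t' : PTree α) : Prop :=
  ∃ u, Relation.ReflTransGen Contract t u ∧ Iso u t'

/-- Refinement of possibly empty trees. -/
def ORefines : Option (PTree α) → Option (PTree α) → Prop
  | none, none => True
  | some a, some b => Refines a b
  | _, _ => False

/-- Isomorphism (equality) of possibly empty unordered trees. -/
def OIso : Option (PTree α) → Option (PTree α) → Prop
  | none, none => True
  | some a, some b => Iso a b
  | _, _ => False

/-- A possibly empty tree is (empty or) a complete subtree of `T`. -/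
def OSubtree (T : PTree α) : Option (PTree α) → Prop
  | none => True
  | some t => Subtree t T

/-- No internal node of degree two (after the usual suppression convention):
every internal node of the rooted tree has at least two children. -/
def NoUnaryNodes (T : PTree α) : Prop :=
  ∀ cs : List (PTree α), Subtree (node cs) T → 2 ≤ cs.length

/-- Every node of the rooted tree has degree at most `D` (the degree of the
root is its number of children; the degree of any other internal node is its
number of children plus one). -/
def DegLE (D : ℕ) (T : PTree α) : Prop :=
  (∀ cs : List (PTree α), T = node cs → cs.length ≤ D) ∧
  (∀ cs : List (PTree α), Subtree (node cs) T → node cs ≠ T → cs.length + 1 ≤ D)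

/-- A rooted tree is binary if every internal node has exactly two children. -/
def Binary (T : PTree α) : Prop :=
  ∀ cs : List (PTree α), Subtree (node cs) T → cs.length = 2

/-- A cut-subtree of `T`: the empty tree, or the tree obtained by selecting
some (at least one) of the subtrees attached to an internal node of `T` and
connecting those subtrees by a common root. -/
def IsCutSubtree (T : PTree α) (a : Option (PTree α)) : Prop :=
  a = none ∨ ∃ cs sel : List (PTree α),
    Subtree (node cs) T ∧ sel.Sublist cs ∧ sel ≠ [] ∧ a = connect sel

variable {k : ℕ}

/-- A cut-subforest of `𝒯`: each component is a cut-subtree of the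
corresponding tree, and at least one component is nonempty. -/
def IsCutSubforest (𝒯 : Fin k → PTree α) (A : Fin k → Option (PTree α)) : Prop :=
  (∀ i, IsCutSubtree (𝒯 i) (A i)) ∧ ∃ i, A i ≠ none

/-- A sub-forest of `𝒯`: each component is the empty tree or a complete
subtree rooted at some node of the corresponding tree, and at least one
component is nonempty. -/
def IsSubForest (𝒯 : Fin k → PTree α) (A : Fin k → Option (PTree α)) : Prop :=
  (∀ i, OSubtree (𝒯 i) (A i)) ∧ ∃ i, A i ≠ none

/-- The set of all labels occurring in the trees of `𝒯`. -/
def allLabels (𝒯 : Fin k → PTree α) : Finset α :=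
  Finset.univ.biUnion fun i => (𝒯 i).labels

/-- A (cut-sub)forest is terminal if each component is the empty tree or a
single leaf of the corresponding tree. -/
def IsTerminal (𝒯 : Fin k → PTree α) (A : Fin k → Option (PTree α)) : Prop :=
  ∀ i, A i = none ∨ ∃ a : α, A i = some (leaf a) ∧ Subtree (leaf a) (𝒯 i)

/-- `Λ(𝒜) = { l ∈ ⋃_j L(𝒜⁽ʲ⁾) ∣ ∀ i, l ∉ L(𝒯⁽ⁱ⁾) − L(𝒜⁽ⁱ⁾) }`. -/
def lambdaSet (𝒯 : Fin k → PTree α) (A : Fin k → Option (PTree α)) : Finset α :=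
  (Finset.univ.biUnion fun j => olabels (A j)).filter
    fun l => ∀ i, l ∉ (𝒯 i).labels \ olabels (A i)

/-- `Y` is a compatible supertree of the forest `A`:
`Y|L(A⁽ⁱ⁾) ⊵ A⁽ⁱ⁾|L(Y)` for every `i`. -/
def IsCompatibleSupertree (A : Fin k → Option (PTree α)) (Y : PTree α) : Prop :=
  ∀ i, ORefines (restrict (olabels (A i)) Y) (orestrict Y.labels (A i))

/-- `X` is an agreement supertree of the forest `A`:
`X|L(A⁽ⁱ⁾) = A⁽ⁱ⁾|L(X)` (as unordered trees) for every `i`. -/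
def IsAgreementSupertree (A : Fin k → Option (PTree α)) (X : PTree α) : Prop :=
  ∀ i, OIso (restrict (olabels (A i)) X) (orestrict X.labels (A i))

/-- An embedded supertree of a cut-subforest `A` of `𝒯`: a distinctly
leaf-labelled compatible supertree `Y` of `A`, with leaves labelled by labels
of `𝒯`, such that `L(Y) ∩ L(𝒯⁽ⁱ⁾) ⊆ L(A⁽ⁱ⁾)` for all `i`. -/
def IsEmbeddedSupertree (𝒯 : Fin k → PTree α) (A : Fin k → Option (PTree α))
    (Y : PTree α) : Prop :=
  Y.labelList.Nodup ∧ Y.labels ⊆ allLabels 𝒯 ∧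
  IsCompatibleSupertree A Y ∧
  ∀ i, Y.labels ∩ (𝒯 i).labels ⊆ olabels (A i)

/-- An enclosed supertree of a sub-forest `A` of `𝒯`: a distinctly
leaf-labelled agreement supertree `X` of `A`, with leaves labelled by labels
of `𝒯`, such that `L(X) ∩ L(𝒯⁽ⁱ⁾) ⊆ L(A⁽ⁱ⁾)` for all `i`. -/
def IsEnclosedSupertree (𝒯 : Fin k → PTree α) (A : Fin k → Option (PTree α))
    (X : PTree α) : Prop :=
  X.labelList.Nodup ∧ X.labels ⊆ allLabels 𝒯 ∧
  IsAgreementSupertree A X ∧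
  ∀ i, X.labels ∩ (𝒯 i).labels ⊆ olabels (A i)

/-- `mcsp 𝒯 A` : the maximum size of an embedded supertree of `A`. -/
noncomputable def mcsp (𝒯 : Fin k → PTree α) (A : Fin k → Option (PTree α)) : ℕ :=
  sSup {m : ℕ | ∃ Y : PTree α, IsEmbeddedSupertree 𝒯 A Y ∧ m = Y.treeSize}

/-- `masp 𝒯 A` : the maximum size of an enclosed supertree of `A`. -/
noncomputable def masp (𝒯 : Fin k → PTree α) (A : Fin k → Option (PTree α)) : ℕ :=
  sSup {m : ℕ | ∃ X : PTree α, IsEnclosedSupertree 𝒯 A X ∧ m = X.treeSize}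

end PTree

/-- `ListSplit s l r` : the list `s` is partitioned into the two
(complementary) sublists `l` and `r`. -/
inductive ListSplit {β : Type} : List β → List β → List β → Prop where
  | nil : ListSplit [] [] []
  | left {s l r : List β} (x : β) : ListSplit s l r → ListSplit (x :: s) (x :: l) r
  | right {s l r : List β} (x : β) : ListSplit s l r → ListSplit (x :: s) l (x :: r)

namespace PTree

variable {α : Type} [DecidableEq α] {k : ℕ}

/-- `(AL, AR)` is a bipartite of the forest `A`: for every `i` the set of
subtrees attached to the root of `A⁽ⁱ⁾` is partitioned into two sets, each of
which is connected by a common root to form `AL⁽ⁱ⁾` resp. `AR⁽ⁱ⁾` (an empty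
set of subtrees yielding the empty tree). -/
def IsBipartite (A AL AR : Fin k → Option (PTree α)) : Prop :=
  ∀ i, ∃ s sL sR : List (PTree α),
    A i = connect s ∧ ListSplit s sL sR ∧ AL i = connect sL ∧ AR i = connect sR

/-- Condition, at one component, for `(b 1, …, b d)` to decompose `a`:
either exactly one `b j` is isomorphic to `a` and the others are empty, or at
least two of the `b j` are nonempty and the nonempty ones are isomorphic to
pairwise distinct subtrees attached to the root of `a`. -/
def DecompAt {d : ℕ} (a : Option (PTree α)) (b : Fin d → Option (PTree α)) : Prop :=
  (∃ j, OIso (b j) a ∧ ∀ j', j' ≠ j → b j' = none) ∨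
  (∃ cs : List (PTree α), a = some (node cs) ∧
    2 ≤ (Finset.univ.filter fun j => (b j).isSome).card ∧
    ∃ idx : Fin d → Option (Fin cs.length),
      (∀ j, b j = none ↔ idx j = none) ∧
      (∀ j t m, b j = some t → idx j = some m → Iso t (cs.get m)) ∧
      (∀ j j' m, idx j = some m → idx j' = some m → j = j'))

/-- `(B 1, …, B d)` is a decomposition of the forest `A` (each `B j` being a
possibly empty sub-forest of `𝒯`). -/
def IsDecomposition (𝒯 : Fin k → PTree α) (A : Fin k → Option (PTree α))
    (d : ℕ) (B : Fin d → Fin k → Option (PTree α)) : Prop :=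
  2 ≤ d ∧ (∀ j i, OSubtree (𝒯 i) (B j i)) ∧ ∀ i, DecompAt (A i) fun j => B j i

/-- The root of the (nonempty) cut-subtree `a` is an internal node of `T`,
i.e. `a` is the complete subtree of `T` rooted at an internal node of `T`. -/
def InternalRooted (T : PTree α) : Option (PTree α) → Prop
  | none => False
  | some t => (∃ cs : List (PTree α), t = node cs) ∧ Subtree t T

/-- One rerooting step: the root is moved to an adjacent internal node. -/
inductive Reroot1 : PTree α → PTree α → Prop where
  | step (l r ds : List (PTree α)) :
      Reroot1 (node (l ++ node ds :: r)) (node (ds ++ [node (l ++ r)]))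

/-- `F` is a rooted variant of the unrooted tree (represented by) `T`:
`F` is obtained by rooting `T` at some internal node. -/
def RootedVariant (T F : PTree α) : Prop := Relation.ReflTransGen Reroot1 T F

/-- A maximal subtree of the unrooted tree (represented by) `T`: a rooted tree
obtained by first rooting `T` at some internal node and then removing at most
one nontrivial subtree attached to that node. -/
def IsMaximalSubtree (T A : PTree α) : Prop :=
  ∃ cs : List (PTree α), RootedVariant T (node cs) ∧
    (A = node cs ∨ ∃ l r ds : List (PTree α), cs = l ++ node ds :: r ∧ A = node (l ++ r))

/-- `T` (a rooted tree, rooted at an internal node) represents an unrooted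
tree without vertices of degree two: the root has at least three neighbours
and every other internal vertex has at least three neighbours as well. -/
def IsUnrootedRep (T : PTree α) : Prop :=
  (∃ cs : List (PTree α), T = node cs ∧ 3 ≤ cs.length) ∧
  ∀ cs : List (PTree α), Subtree (node cs) T → node cs ≠ T → 2 ≤ cs.length

end PTree
namespace PTree
variable {α : Type} [DecidableEq α]

theorem labelList_node (cs : List (PTree α)) :
    (node cs).labelList = cs.flatMap labelList := by
  rw [labelList, ← List.attach_map_subtype_val cs, List.flatMap_map]
  simp

theorem restrict_node (S : Finset α) (cs : List (PTree α)) :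
    restrict S (node cs) = connect ((cs.map (restrict S)).reduceOption) := by
  rw [restrict, ← List.attach_map_subtype_val cs, List.map_map]
  simp

theorem mem_labels {x : α} {t : PTree α} : x ∈ t.labels ↔ x ∈ t.labelList :=
  List.mem_toFinset

theorem connect_eq_none {ts : List (PTree α)} : connect ts = none ↔ ts = [] := by
  match ts with
  | [] => simp [connect]
  | [t] => simp [connect]
  | a :: b :: r => simp [connect]

theorem connect_two_le {ts : List (PTree α)} (h : 2 ≤ ts.length) :
    connect ts = some (node ts) := by
  match ts with
  | [] => simp at h
  | [t] => simp at h
  | a :: b :: r => simp [connect]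

theorem connect_cases {ts : List (PTree α)} {t : PTree α} (h : connect ts = some t) :
    ts = [t] ∨ (t = node ts ∧ 2 ≤ ts.length) := by
  match ts with
  | [] => simp [connect] at h
  | [a] => simp [connect] at h; left; rw [h]
  | a :: b :: r =>
    right
    rw [connect_two_le (by simp)] at h
    constructor
    · exact (Option.some_inj.mp h).symm
    · simp
end PTree
set_option linter.unusedSectionVars false
namespace PTree
variable {α : Type} [DecidableEq α]

theorem aux_flatten_sublist {β : Type} {l l' : List (List β)} (h : l.Sublist l') :
    l.flatten.Sublist l'.flatten := by
  induction h with
  | slnil => simp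
  | cons a _ ih => rw [List.flatten_cons]; exact ih.trans (List.sublist_append_right _ _)
  | cons_cons a _ ih => rw [List.flatten_cons, List.flatten_cons]; exact List.Sublist.append_left ih a

theorem aux_flatMap_sublist {β γ : Type} {l l' : List β} (f : β → List γ)
    (h : l.Sublist l') : (l.flatMap f).Sublist (l'.flatMap f) :=
  aux_flatten_sublist (List.Sublist.map f h)

theorem aux_flatMap_sublist_of_mem {β γ : Type} {l : List β} {x : β} (f : β → List γ)
    (h : x ∈ l) : (f x).Sublist (l.flatMap f) :=
  List.sublist_flatten_of_mem (List.mem_map_of_mem h : f x ∈ l.map f)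

theorem mem_olabels_connect {x : α} {ts : List (PTree α)} :
    x ∈ olabels (connect ts) ↔ x ∈ ts.flatMap labelList := by
  match ts with
  | [] => simp [connect, olabels]
  | [t] => simp [connect, olabels, mem_labels]
  | a :: b :: r =>
    rw [connect_two_le (by simp)]
    simp only [olabels, mem_labels, labelList_node]

theorem subtree_labelList_sublist {t T : PTree α} (h : Subtree t T) :
    t.labelList.Sublist T.labelList := by
  induction h with
  | refl => exact List.Sublist.refl _
  | child hmem _ ih =>
    refine ih.trans ?_
    rw [labelList_node]
    exact aux_flatMap_sublist_of_mem _ hmem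

theorem subtree_trans {a b c : PTree α} (h1 : Subtree a b) (h2 : Subtree b c) :
    Subtree a c := by
  induction h2 with
  | refl => exact h1
  | child hmem _ ih => exact Subtree.child hmem ih

theorem iso_refl (t : PTree α) : Iso t t := by
  have : ∀ n (t : PTree α), sizeOf t ≤ n → Iso t t := by
    intro n
    induction n with
    | zero => intro t ht; cases t <;> simp at ht
    | succ n ih =>
      intro t ht
      cases t with
      | leaf a => exact Iso.leaf a
      | node cs =>
        refine Iso.node ?_ (List.Perm.refl cs)
        refine List.forall₂_same.mpr ?_
        intro c hc
        refine ih c ?_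
        have := sizeOf_lt_of_mem hc
        simp only [node.sizeOf_spec] at ht this
        omega
  exact this (sizeOf t) t le_rfl

theorem refines_refl (t : PTree α) : Refines t t :=
  ⟨t, Relation.ReflTransGen.refl, iso_refl t⟩

theorem restrict_congr {S S' : Finset α} :
    ∀ t : PTree α, (∀ x ∈ t.labelList, (x ∈ S ↔ x ∈ S')) → restrict S t = restrict S' t := by
  have : ∀ n (t : PTree α), sizeOf t ≤ n →
      (∀ x ∈ t.labelList, (x ∈ S ↔ x ∈ S')) → restrict S t = restrict S' t := by
    intro n
    induction n with
    | zero => intro t ht; cases t <;> simp at ht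
    | succ n ih =>
      intro t ht hx
      cases t with
      | leaf a =>
        have := hx a (by simp [labelList])
        rw [restrict, restrict]
        by_cases h : a ∈ S
        · rw [if_pos h, if_pos (this.mp h)]
        · rw [if_neg h, if_neg (fun hh => h (this.mpr hh))]
      | node cs =>
        rw [restrict_node, restrict_node]
        have hmap : List.map (restrict S) cs = List.map (restrict S') cs := by
          apply List.map_congr_left
          intro c hc
          refine ih c ?_ ?_
          · have := sizeOf_lt_of_mem hc
            simp only [node.sizeOf_spec] at ht this
            omega
          · intro x hxc
            refine hx x ?_
            rw [labelList_node]
            exact (aux_flatMap_sublist_of_mem labelList hc).mem hxc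
        rw [hmap]
  exact fun t => this (sizeOf t) t le_rfl

theorem orestrict_connect (S : Finset α) (ts : List (PTree α)) :
    orestrict S (connect ts) = connect ((ts.map (restrict S)).reduceOption) := by
  match ts with
  | [] => simp [connect, orestrict]
  | [t] =>
    simp only [connect, orestrict, Option.bind_some, List.map_cons, List.map_nil]
    cases h : restrict S t with
    | none => simp [List.reduceOption]
    | some u => simp [List.reduceOption]
  | a :: b :: r =>
    rw [connect_two_le (by simp)]
    simp only [orestrict, Option.bind_some]
    exact restrict_node S _

end PTree
theorem ListSplit.perm {β : Type} {s l r : List β} (h : ListSplit s l r) :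
    s.Perm (l ++ r) := by
  induction h with
  | nil => simp
  | left x _ ih => simpa using ih.cons x
  | right x _ ih => exact (ih.cons x).trans (List.perm_middle).symm

theorem ListSplit.map {β γ : Type} (f : β → γ) {s l r : List β} (h : ListSplit s l r) :
    ListSplit (s.map f) (l.map f) (r.map f) := by
  induction h with
  | nil => exact ListSplit.nil
  | left x _ ih => exact ListSplit.left (f x) ih
  | right x _ ih => exact ListSplit.right (f x) ih

theorem ListSplit.reduceOption {β : Type} {s l r : List (Option β)} (h : ListSplit s l r) :
    ListSplit s.reduceOption l.reduceOption r.reduceOption := by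
  induction h with
  | nil => exact ListSplit.nil
  | left x _ ih =>
    cases x with
    | none => simpa [List.reduceOption_cons_of_none] using ih
    | some a => simpa [List.reduceOption_cons_of_some] using ListSplit.left a ih
  | right x _ ih =>
    cases x with
    | none => simpa [List.reduceOption_cons_of_none] using ih
    | some a => simpa [List.reduceOption_cons_of_some] using ListSplit.right a ih

theorem ListSplit.eq_of_left_nil {β : Type} : ∀ {s l r : List β}, ListSplit s l r → l = [] → s = r := by
  intro s l r h
  induction h with
  | nil => intro; rfl
  | left x _ ih => intro hh; simp at hh
  | right x _ ih => intro hh; rw [ih hh]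

theorem ListSplit.eq_of_right_nil {β : Type} : ∀ {s l r : List β}, ListSplit s l r → r = [] → s = l := by
  intro s l r h
  induction h with
  | nil => intro; rfl
  | left x _ ih => intro hh; rw [ih hh]
  | right x _ ih => intro hh; simp at hh

namespace PTree
variable {α : Type} [DecidableEq α]

theorem rtg_contract_child {c c' : PTree α} (l r : List (PTree α))
    (h : Relation.ReflTransGen Contract c c') :
    Relation.ReflTransGen Contract (node (l ++ c :: r)) (node (l ++ c' :: r)) := by
  induction h with
  | refl => exact Relation.ReflTransGen.refl
  | tail _ hstep ih => exact ih.tail (Contract.child l r hstep)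

theorem absorb {u t : PTree α} {q : List (PTree α)} (hiso : Iso u t)
    (hq : connect q = some t) (l r : List (PTree α)) :
    ∃ e q', Relation.ReflTransGen Contract (node (l ++ u :: r)) (node (l ++ (e ++ r))) ∧
      List.Forall₂ Iso e q' ∧ q'.Perm q := by
  rcases connect_cases hq with h1 | ⟨h2, _⟩
  · refine ⟨[u], [t], by simpa using Relation.ReflTransGen.refl, ?_, by rw [h1]⟩
    exact List.Forall₂.cons hiso List.Forall₂.nil
  · subst h2
    cases hiso with
    | node hf hp =>
      refine ⟨_, _, Relation.ReflTransGen.single ?_, hf, hp⟩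
      simpa [List.append_assoc] using Contract.top l r _

theorem combine {yL yR tL tR : PTree α} {qL qR qs : List (PTree α)}
    (hL : Refines yL tL) (hR : Refines yR tR)
    (hqL : connect qL = some tL) (hqR : connect qR = some tR)
    (hsplit : ListSplit qs qL qR) :
    Refines (node [yL, yR]) (node qs) := by
  obtain ⟨uL, pL, iL⟩ := hL
  obtain ⟨uR, pR, iR⟩ := hR
  have step1 : Relation.ReflTransGen Contract (node [yL, yR]) (node [uL, uR]) := by
    have h1 := rtg_contract_child (c := yL) (c' := uL) [] [yR] pL
    have h2 := rtg_contract_child (c := yR) (c' := uR) [uL] [] pR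
    simpa using h1.trans (by simpa using h2)
  obtain ⟨eL, qL', stepL, hfL, hpL⟩ := absorb iL hqL [] [uR]
  obtain ⟨eR, qR', stepR, hfR, hpR⟩ := absorb iR hqR eL []
  refine ⟨node (eL ++ eR), ?_, ?_⟩
  · refine step1.trans ?_
    have s1 : Relation.ReflTransGen Contract (node [uL, uR]) (node (eL ++ [uR])) := by
      simpa using stepL
    refine s1.trans ?_
    simpa using stepR
  · exact Iso.node (List.rel_append hfL hfR)
      ((hpL.append hpR).trans hsplit.perm.symm)

end PTree
namespace PTree
variable {α : Type} [DecidableEq α] {k : ℕ}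

theorem key_sublist {T : PTree α} {a : Option (PTree α)} {s : List (PTree α)}
    (hcut : IsCutSubtree T a) (hs : a = connect s) :
    (s.flatMap labelList).Sublist T.labelList := by
  rcases hcut with hnone | ⟨cs, sel, hsub, hselcs, hselne, ha⟩
  · rw [hnone] at hs
    have : s = [] := connect_eq_none.mp hs.symm
    subst this; simp
  · have hTsub : (cs.flatMap labelList).Sublist T.labelList := by
      have := subtree_labelList_sublist hsub
      rwa [labelList_node] at this
    rw [ha] at hs
    obtain ⟨t, ht⟩ : ∃ t, connect sel = some t := by
      cases hc : connect sel with
      | none => exact absurd (connect_eq_none.mp hc) hselne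
      | some t => exact ⟨t, rfl⟩
    have hst : connect s = some t := by rw [← hs, ht]
    have hstep : (s.flatMap labelList).Sublist (cs.flatMap labelList) := by
      have hmemt : ∀ u, u ∈ sel → u ∈ cs := fun u hu => hselcs.mem hu
      rcases connect_cases ht with hsel1 | ⟨hsel2, _⟩ <;>
      rcases connect_cases hst with hs1 | ⟨hs2, _⟩
      · -- sel = [t], s = [t]
        subst hs1
        have : t ∈ cs := hmemt t (by rw [hsel1]; simp)
        simpa using aux_flatMap_sublist_of_mem labelList this
      · -- sel = [t], t = node s
        have htcs : t ∈ cs := hmemt t (by rw [hsel1]; simp)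
        have h1 : (s.flatMap labelList).Sublist t.labelList := by
          rw [hs2, labelList_node]
        exact h1.trans (aux_flatMap_sublist_of_mem labelList htcs)
      · -- t = node sel, s = [t]
        subst hs1
        have h1 : ([t].flatMap labelList).Sublist (sel.flatMap labelList) := by
          subst hsel2
          simp only [List.flatMap_cons, List.flatMap_nil, List.append_nil, labelList_node]
          exact List.Sublist.refl _
        exact h1.trans (aux_flatMap_sublist _ hselcs)
      · -- t = node sel, t = node s : sel = s
        have hns : node sel = node s := hsel2.symm.trans hs2
        have : sel = s := by injection hns
        subst this
        exact aux_flatMap_sublist _ hselcs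
    exact hstep.trans hTsub

theorem main_aux (𝒯 : Fin k → PTree α)
    (hphylo : ∀ i, (𝒯 i).labelList.Nodup)
    (A AL AR : Fin k → Option (PTree α))
    (hA : IsCutSubforest 𝒯 A)
    (hbip : IsBipartite A AL AR)
    (YL YR : PTree α)
    (hYL : IsEmbeddedSupertree 𝒯 AL YL)
    (hYR : IsEmbeddedSupertree 𝒯 AR YR) :
    IsEmbeddedSupertree 𝒯 A (node [YL, YR]) := by
  obtain ⟨ndL, subL, compL, capL⟩ := hYL
  obtain ⟨ndR, subR, compR, capR⟩ := hYR
  have hYlab : ∀ x : α, x ∈ (node [YL, YR]).labels ↔ (x ∈ YL.labels ∨ x ∈ YR.labels) := by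
    intro x
    simp [mem_labels, labelList_node]
  -- per-index facts
  have fact : ∀ i, (∀ x, x ∈ olabels (A i) ↔ (x ∈ olabels (AL i) ∨ x ∈ olabels (AR i))) ∧
      (∀ x, x ∈ olabels (AL i) → x ∈ olabels (AR i) → False) ∧
      (∀ x, x ∈ olabels (A i) → x ∈ (𝒯 i).labels) := by
    intro i
    obtain ⟨s, sL, sR, hAs, hsp, hALs, hARs⟩ := hbip i
    have hkey : (s.flatMap labelList).Sublist (𝒯 i).labelList :=
      key_sublist (hA.1 i) hAs
    have hperm : (s.flatMap labelList).Perm (sL.flatMap labelList ++ sR.flatMap labelList) := by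
      have h1 := hsp.perm
      have h2 : (s.flatMap labelList).Perm ((sL ++ sR).flatMap labelList) := by
        unfold List.flatMap
        exact (h1.map labelList).flatten
      rwa [List.flatMap_append] at h2
    have hnd : (sL.flatMap labelList ++ sR.flatMap labelList).Nodup :=
      hperm.nodup (hkey.nodup (hphylo i))
    have memA : ∀ x, x ∈ olabels (A i) ↔ x ∈ s.flatMap labelList := by
      intro x; rw [hAs]; exact mem_olabels_connect
    have memL : ∀ x, x ∈ olabels (AL i) ↔ x ∈ sL.flatMap labelList := by
      intro x; rw [hALs]; exact mem_olabels_connect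
    have memR : ∀ x, x ∈ olabels (AR i) ↔ x ∈ sR.flatMap labelList := by
      intro x; rw [hARs]; exact mem_olabels_connect
    refine ⟨?_, ?_, ?_⟩
    · intro x
      rw [memA, memL, memR, hperm.mem_iff, List.mem_append]
    · intro x hl hr
      rw [memL] at hl; rw [memR] at hr
      exact (List.disjoint_of_nodup_append hnd) hl hr
    · intro x hx
      rw [memA] at hx
      exact mem_labels.mpr (hkey.mem hx)
  have hALsubT : ∀ i x, x ∈ olabels (AL i) → x ∈ (𝒯 i).labels := fun i x h =>
    (fact i).2.2 x (((fact i).1 x).mpr (Or.inl h))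
  have hARsubT : ∀ i x, x ∈ olabels (AR i) → x ∈ (𝒯 i).labels := fun i x h =>
    (fact i).2.2 x (((fact i).1 x).mpr (Or.inr h))
  have hallL : ∀ x ∈ YL.labels, ∃ i, x ∈ (𝒯 i).labels := by
    intro x hx
    have := subL hx
    simpa [allLabels] using this
  have hallR : ∀ x ∈ YR.labels, ∃ i, x ∈ (𝒯 i).labels := by
    intro x hx
    have := subR hx
    simpa [allLabels] using this
  have hdisjY : ∀ x, x ∈ YL.labels → x ∈ YR.labels → False := by
    intro x hl hr
    obtain ⟨i, hi⟩ := hallL x hl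
    have h1 : x ∈ olabels (AL i) := capL i (Finset.mem_inter.mpr ⟨hl, hi⟩)
    have h2 : x ∈ olabels (AR i) := capR i (Finset.mem_inter.mpr ⟨hr, hi⟩)
    exact (fact i).2.1 x h1 h2
  refine ⟨?_, ?_, ?_, ?_⟩
  · -- Nodup
    rw [labelList_node]
    simp only [List.flatMap_cons, List.flatMap_nil, List.append_nil]
    rw [List.nodup_append]
    exact ⟨ndL, ndR, fun x hx y hy hxy =>
      hdisjY x (mem_labels.mpr hx) (mem_labels.mpr (by rw [hxy]; exact hy))⟩
  · -- labels subset
    intro x hx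
    rcases (hYlab x).mp hx with h | h
    · exact subL h
    · exact subR h
  · -- compatible supertree
    intro i
    obtain ⟨s, sL, sR, hAs, hsp, hALs, hARs⟩ := hbip i
    have memL : ∀ x, x ∈ olabels (AL i) ↔ x ∈ sL.flatMap labelList := by
      intro x; rw [hALs]; exact mem_olabels_connect
    have memR : ∀ x, x ∈ olabels (AR i) ↔ x ∈ sR.flatMap labelList := by
      intro x; rw [hARs]; exact mem_olabels_connect
    -- restriction sets agree
    have hLeq : restrict (olabels (A i)) YL = restrict (olabels (AL i)) YL := by
      apply restrict_congr
      intro x hx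
      constructor
      · intro hxa
        rcases ((fact i).1 x).mp hxa with h | h
        · exact h
        · exact capL i (Finset.mem_inter.mpr ⟨mem_labels.mpr hx, hARsubT i x h⟩)
      · intro h
        exact ((fact i).1 x).mpr (Or.inl h)
    have hReq : restrict (olabels (A i)) YR = restrict (olabels (AR i)) YR := by
      apply restrict_congr
      intro x hx
      constructor
      · intro hxa
        rcases ((fact i).1 x).mp hxa with h | h
        · exact capR i (Finset.mem_inter.mpr ⟨mem_labels.mpr hx, hALsubT i x h⟩)
        · exact h
      · intro h
        exact ((fact i).1 x).mpr (Or.inr h)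
    have mapL : sL.map (restrict YL.labels) = sL.map (restrict (node [YL, YR]).labels) := by
      apply List.map_congr_left
      intro t ht
      apply restrict_congr
      intro x hx
      rw [hYlab]
      constructor
      · exact Or.inl
      · rintro (h | h)
        · exact h
        · exfalso
          have h1 : x ∈ olabels (AL i) :=
            (memL x).mpr ((aux_flatMap_sublist_of_mem labelList ht).mem hx)
          have h2 : x ∈ olabels (AR i) :=
            capR i (Finset.mem_inter.mpr ⟨h, hALsubT i x h1⟩)
          exact (fact i).2.1 x h1 h2
    have mapR : sR.map (restrict YR.labels) = sR.map (restrict (node [YL, YR]).labels) := by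
      apply List.map_congr_left
      intro t ht
      apply restrict_congr
      intro x hx
      rw [hYlab]
      constructor
      · exact Or.inr
      · rintro (h | h)
        · exfalso
          have h1 : x ∈ olabels (AR i) :=
            (memR x).mpr ((aux_flatMap_sublist_of_mem labelList ht).mem hx)
          have h2 : x ∈ olabels (AL i) :=
            capL i (Finset.mem_inter.mpr ⟨h, hARsubT i x h1⟩)
          exact (fact i).2.1 x h2 h1
        · exact h
    -- notation
    set YLab := (node [YL, YR]).labels with hYLabdef
    set qL := (sL.map (restrict YLab)).reduceOption with hqLdef
    set qR := (sR.map (restrict YLab)).reduceOption with hqRdef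
    set qs := (s.map (restrict YLab)).reduceOption with hqsdef
    have hsplitq : ListSplit qs qL qR := (hsp.map (restrict YLab)).reduceOption
    have hcompL : ORefines (restrict (olabels (A i)) YL) (connect qL) := by
      rw [hLeq]
      have h2 : orestrict YL.labels (AL i) = connect qL := by
        rw [hALs, orestrict_connect, mapL]
      have := compL i
      rwa [h2] at this
    have hcompR : ORefines (restrict (olabels (A i)) YR) (connect qR) := by
      rw [hReq]
      have h2 : orestrict YR.labels (AR i) = connect qR := by
        rw [hARs, orestrict_connect, mapR]
      have := compR i
      rwa [h2] at this
    have hRHS : orestrict YLab (A i) = connect qs := by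
      rw [hAs, orestrict_connect]
    have hLHS : restrict (olabels (A i)) (node [YL, YR]) =
        connect ([restrict (olabels (A i)) YL, restrict (olabels (A i)) YR].reduceOption) := by
      rw [restrict_node]
      rfl
    show ORefines (restrict (olabels (A i)) (node [YL, YR])) (orestrict YLab (A i))
    rw [hLHS, hRHS]
    -- case analysis
    cases hpL : restrict (olabels (A i)) YL with
    | none =>
      rw [hpL] at hcompL
      have hqLnil : qL = [] := by
        cases hq : connect qL with
        | none => exact connect_eq_none.mp hq
        | some t => rw [hq] at hcompL; exact hcompL.elim
      have hqs : qs = qR := ListSplit.eq_of_left_nil hsplitq hqLnil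
      rw [hqs]
      cases hpR : restrict (olabels (A i)) YR with
      | none =>
        rw [hpR] at hcompR
        have hqRnil : qR = [] := by
          cases hq : connect qR with
          | none => exact connect_eq_none.mp hq
          | some t => rw [hq] at hcompR; exact hcompR.elim
        rw [hqRnil]
        simp [List.reduceOption, connect, ORefines]
      | some yR =>
        rw [hpR] at hcompR
        simpa [List.reduceOption, connect] using hcompR
    | some yL =>
      rw [hpL] at hcompL
      cases hpR : restrict (olabels (A i)) YR with
      | none =>
        rw [hpR] at hcompR
        have hqRnil : qR = [] := by
          cases hq : connect qR with
          | none => exact connect_eq_none.mp hq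
          | some t => rw [hq] at hcompR; exact hcompR.elim
        have hqs : qs = qL := ListSplit.eq_of_right_nil hsplitq hqRnil
        rw [hqs]
        simpa [List.reduceOption, connect] using hcompL
      | some yR =>
        rw [hpR] at hcompR
        obtain ⟨tL, htL⟩ : ∃ t, connect qL = some t := by
          cases hq : connect qL with
          | none => rw [hq] at hcompL; exact hcompL.elim
          | some t => exact ⟨t, rfl⟩
        obtain ⟨tR, htR⟩ : ∃ t, connect qR = some t := by
          cases hq : connect qR with
          | none => rw [hq] at hcompR; exact hcompR.elim
          | some t => exact ⟨t, rfl⟩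
        rw [htL] at hcompL
        rw [htR] at hcompR
        have hqsel : connect qs = some (node qs) := by
          apply connect_two_le
          have h1 : qL ≠ [] := fun h => by rw [h] at htL; simp [connect] at htL
          have h2 : qR ≠ [] := fun h => by rw [h] at htR; simp [connect] at htR
          have := hsplitq.perm.length_eq
          rw [List.length_append] at this
          have l1 : 1 ≤ qL.length := List.length_pos_iff.mpr h1
          have l2 : 1 ≤ qR.length := List.length_pos_iff.mpr h2
          omega
        have : connect ([some yL, some yR].reduceOption) = some (node [yL, yR]) := by
          simp [List.reduceOption, connect]
        rw [this, hqsel]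
        exact combine hcompL hcompR htL htR hsplitq
  · -- label intersection
    intro i x hx
    rw [Finset.mem_inter] at hx
    obtain ⟨hxy, hxt⟩ := hx
    rcases (hYlab x).mp hxy with h | h
    · exact ((fact i).1 x).mpr (Or.inl (capL i (Finset.mem_inter.mpr ⟨h, hxt⟩)))
    · exact ((fact i).1 x).mpr (Or.inr (capR i (Finset.mem_inter.mpr ⟨h, hxt⟩)))

end PTree

/-- If `(𝒜_L, 𝒜_R)` is a bipartite of a cut-subforest `𝒜` of
`𝒯` and `Y_L`, `Y_R` are embedded supertrees of `𝒜_L`, `𝒜_R` respectively,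
then the tree formed by connecting `Y_L` and `Y_R` to a new common root is an
embedded supertree of `𝒜`. -/
theorem maximum_agreement_supertree_stmt2
    {α : Type} [DecidableEq α] {k : ℕ} (𝒯 : Fin k → PTree α)
    (hphylo : ∀ i, (𝒯 i).labelList.Nodup)
    (A AL AR : Fin k → Option (PTree α))
    (hA : PTree.IsCutSubforest 𝒯 A)
    (hbip : PTree.IsBipartite A AL AR)
    (YL YR : PTree α)
    (hYL : PTree.IsEmbeddedSupertree 𝒯 AL YL)
    (hYR : PTree.IsEmbeddedSupertree 𝒯 AR YR) :
    PTree.IsEmbeddedSupertree 𝒯 A (PTree.node [YL, YR]) := by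
  exact PTree.main_aux 𝒯 hphylo A AL AR hA hbip YL YR hYL hYR
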